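/- With notation as in the clustering recursion, for all 2 ≤ s ≤ j_n + 1: P(M_s ≤ u_n) = Σ_{i=0}^{s−2} p·q^i·F_{β,p}(u_{n−i}) + q^{s−1}·F_{β,p}(u_{n−(s−1)}), and substituting F_{β,p}(u_{n−i}) = 1 − q^{n−i}·ψ(x) yields P(M_s ≤ u_n) = 1 − (p(s−1)+1)·q^n·ψ(x). -/

import Mathlib

open MeasureTheory ProbabilityTheory

theorem stmt14 {Ω : Type*} [MeasurableSpace Ω] (P : Measure Ω)
    [IsProbabilityMeasure P]
    (β p q : ℝ) (hβ0 : 0 < β) (hβ : β ≤ 1/2)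
    (hp0 : 0 < p) (hp1 : p < 1) (hq : q = 1 - p)
    (X : ℕ → Ω → ℝ) (hmX : ∀ k, Measurable (X k))
    (x : ℝ) (hx : x < 0) (n : ℕ)
    (u : ℤ → ℝ) (hu : ∀ m : ℤ, u m = 1 + β ^ m * x)
    (ψ : ℝ)
    (jn : ℕ) (hjn1 : 0 < u ((n : ℤ) - jn)) (hjn2 : u ((n : ℤ) - (jn + 1)) ≤ 0)
    (hmarg : ∀ k : ℕ, ∀ i : ℕ, (i : ℤ) ≤ jn →
      (P {ω | X k ω ≤ u ((n : ℤ) - i)}).toReal = 1 - q ^ ((n : ℤ) - i) * ψ)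
    (hrec : ∀ s i : ℕ, 2 ≤ s → (i : ℤ) + 1 ≤ jn →
      (P {ω | (∀ k < s, X k ω ≤ u n) ∧ X (s-1) ω ≤ u ((n : ℤ) - i)}).toReal =
        p * (P {ω | ∀ k < s - 1, X k ω ≤ u n}).toReal +
          q * (P {ω | (∀ k < s - 1, X k ω ≤ u n) ∧
                X (s-1-1) ω ≤ u ((n : ℤ) - (i + 1))}).toReal) :
    ∀ s : ℕ, 2 ≤ s → s ≤ jn + 1 →
      (P {ω | ∀ k < s, X k ω ≤ u n}).toReal =
        (∑ i ∈ Finset.range (s - 1),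
          p * q ^ i * (1 - q ^ ((n : ℤ) - i) * ψ)) +
          q ^ (s - 1) * (1 - q ^ ((n : ℤ) - (s - 1 : ℕ)) * ψ) ∧
      (P {ω | ∀ k < s, X k ω ≤ u n}).toReal =
        1 - (p * ((s : ℝ) - 1) + 1) * q ^ n * ψ := by
  have hq0 : q ≠ 0 := by rw [hq]; intro h; nlinarith
  have hpq : p + q = 1 := by rw [hq]; ring
  -- rewrite integer powers of q as quotients of natural powers
  have hE : ∀ j : ℕ, q ^ ((n : ℤ) - j) = q ^ n / q ^ j := by
    intro j
    rw [zpow_sub₀ hq0, zpow_natCast, zpow_natCast]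
  have hqj0 : ∀ j : ℕ, (q : ℝ) ^ j ≠ 0 := fun j => pow_ne_zero j hq0
  -- monotonicity of u
  have humono : ∀ i : ℕ, u ((n : ℤ) - i) ≤ u n := by
    intro i
    rw [hu, hu]
    have h1 : β ^ (n : ℤ) ≤ β ^ ((n : ℤ) - i) :=
      zpow_le_zpow_right_of_le_one₀ hβ0 (by linarith) (by omega)
    nlinarith
  -- the key closed form for the joint probabilities
  have key : ∀ s : ℕ, ∀ i : ℕ, 1 ≤ s → (s : ℤ) - 1 + i ≤ jn →
      (P {ω | (∀ k < s, X k ω ≤ u n) ∧ X (s-1) ω ≤ u ((n : ℤ) - i)}).toReal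
        = 1 - (p * ((s : ℝ) - 1) * q ^ n + q ^ n / q ^ i) * ψ := by
    intro s
    induction s with
    | zero => intro i h1 _; omega
    | succ t ih =>
      intro i _ hle
      by_cases ht : t = 0
      · subst ht
        have hij : (i : ℤ) ≤ jn := by push_cast at hle; omega
        have hset : {ω | (∀ k < 1, X k ω ≤ u n) ∧ X 0 ω ≤ u ((n : ℤ) - i)}
            = {ω | X 0 ω ≤ u ((n : ℤ) - i)} := by
          ext ω
          simp only [Set.mem_setOf_eq]
          constructor
          · exact fun h => h.2
          · intro h
            refine ⟨fun k hk => ?_, h⟩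
            interval_cases k
            exact le_trans h (humono i)
        simp only [Nat.add_sub_cancel] at hset ⊢
        rw [hset, hmarg 0 i hij, hE i]
        push_cast
        ring
      · have ht1 : 1 ≤ t := by omega
        have hi1 : (i : ℤ) + 1 ≤ jn := by push_cast at hle; omega
        have hr := hrec (t+1) i (by omega) hi1
        simp only [Nat.add_sub_cancel] at hr ⊢
        have hset1 : {ω | ∀ k < t, X k ω ≤ u n}
            = {ω | (∀ k < t, X k ω ≤ u n) ∧ X (t-1) ω ≤ u ((n : ℤ) - (0 : ℕ))} := by
          ext ω
          simp only [Set.mem_setOf_eq, Nat.cast_zero, sub_zero]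
          constructor
          · intro h
            exact ⟨h, by
              have := h (t-1) (by omega)
              simpa using this⟩
          · exact fun h => h.1
        have hset2 : {ω | (∀ k < t, X k ω ≤ u n) ∧ X (t-1) ω ≤ u ((n : ℤ) - ((i : ℤ) + 1))}
            = {ω | (∀ k < t, X k ω ≤ u n) ∧ X (t-1) ω ≤ u ((n : ℤ) - ((i+1 : ℕ) : ℤ))} := by
          norm_cast
        rw [hset1, hset2] at hr
        rw [hr, ih 0 ht1 (by push_cast at hle ⊢; omega),
          ih (i+1) ht1 (by push_cast at hle ⊢; omega)]
        have hdiv : q * ((q : ℝ) ^ n / q ^ (i+1)) = q ^ n / q ^ i := by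
          rw [pow_succ]
          field_simp
        simp only [pow_zero, div_one]
        push_cast
        linear_combination (1 - ψ * (p * ((t : ℝ) - 1) * q ^ n)) * hpq - ψ * hdiv
  -- closed-form for the sum
  have hsum : ∀ m : ℕ,
      (∑ i ∈ Finset.range m, p * q ^ i * (1 - q ^ ((n : ℤ) - i) * ψ))
        + q ^ m * (1 - q ^ ((n : ℤ) - (m : ℕ)) * ψ)
        = 1 - (p * (m : ℝ) + 1) * q ^ n * ψ := by
    intro m
    induction m with
    | zero =>
      simp [hE 0]
    | succ m ihm =>
      rw [Finset.sum_range_succ, hE m, hE (m+1)] at *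
      have e1 : (q : ℝ) ^ m * (1 - q ^ n / q ^ m * ψ) = q ^ m - q ^ n * ψ := by
        field_simp
      have e2 : (q : ℝ) ^ (m+1) * (1 - q ^ n / q ^ (m+1) * ψ) = q ^ (m+1) - q ^ n * ψ := by
        field_simp
      have e3 : p * (q : ℝ) ^ m * (1 - q ^ n / q ^ m * ψ) = p * q ^ m - p * q ^ n * ψ := by
        field_simp
      rw [e1] at ihm
      rw [e2, e3]
      push_cast
      linear_combination ihm + q ^ m * hpq
  intro s hs2 hsj
  have hcast : ((s - 1 : ℕ) : ℝ) = (s : ℝ) - 1 := by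
    have : 1 ≤ s := by omega
    push_cast [this]
    ring
  -- the second identity
  have hset : {ω | ∀ k < s, X k ω ≤ u n}
      = {ω | (∀ k < s, X k ω ≤ u n) ∧ X (s-1) ω ≤ u ((n : ℤ) - (0 : ℕ))} := by
    ext ω
    simp only [Set.mem_setOf_eq, Nat.cast_zero, sub_zero]
    constructor
    · intro h
      exact ⟨h, h (s-1) (by omega)⟩
    · exact fun h => h.1
  have hval : (P {ω | ∀ k < s, X k ω ≤ u n}).toReal
      = 1 - (p * ((s : ℝ) - 1) + 1) * q ^ n * ψ := by
    rw [hset, key s 0 (by omega) (by push_cast; omega)]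
    simp only [pow_zero]
    ring
  refine ⟨?_, hval⟩
  rw [hsum (s-1), hval, hcast]
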